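/- Let c_{lw} be nonnegative integers indexed by pairs (l,w) with l a positive integer and w ranging over a set of size at most 2^k, such that ∑_{l,w} c_{lw} = c and ∑_{l,w} l·c_{lw} = t with t ≥ c ≥ 1. Then ∑_{l,w} c_{lw}·log₂(c / c_{lw}) ≤ k·c + (t+c)·log₂(1 + c/t) + c·log₂(t/c). -/

import Mathlib

open Finset in
/-- Lemma 2 of the paper.  Nonnegative integer counts `cnt (l, w)`, supported on
a finite set `S` of pairs with `l ≥ 1` and `w` in a set of size at most `2^k`,
with `∑ cnt = c` and `∑ l·cnt = t`, `t ≥ c ≥ 1`, satisfy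
`∑ cnt_{lw}·log₂(c/cnt_{lw}) ≤ k·c + (t+c)·log₂(1+c/t) + c·log₂(t/c)`.
(Terms with `cnt = 0` vanish since `c/0 = 0` and `log₂ 0 = 0` in Mathlib.) -/
theorem stmt6 {W : Type*} [Fintype W] (k : ℕ) (hW : Fintype.card W ≤ 2 ^ k)
    (S : Finset (ℕ × W)) (cnt : ℕ × W → ℕ)
    (hl : ∀ q ∈ S, 1 ≤ q.1)
    (hsupp : ∀ q ∉ S, cnt q = 0)
    (c t : ℕ) (hc : 1 ≤ c) (hct : c ≤ t)
    (hsum : ∑ q ∈ S, cnt q = c)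
    (hwsum : ∑ q ∈ S, q.1 * cnt q = t) :
    ∑ q ∈ S, (cnt q : ℝ) * Real.logb 2 ((c : ℝ) / (cnt q : ℝ)) ≤
      (k : ℝ) * c + ((t : ℝ) + c) * Real.logb 2 (1 + (c : ℝ) / t) +
        (c : ℝ) * Real.logb 2 ((t : ℝ) / c) := by
  have hc0 : (0:ℝ) < (c:ℝ) := by exact_mod_cast hc
  have hct' : (c:ℝ) ≤ (t:ℝ) := by exact_mod_cast hct
  have ht0 : (0:ℝ) < (t:ℝ) := lt_of_lt_of_le hc0 hct'
  have htc : (0:ℝ) < (t:ℝ) + c := by linarith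
  set r : ℝ := (t:ℝ) / ((t:ℝ) + c) with hrdef
  have hr0 : 0 < r := div_pos ht0 htc
  have hr1 : r < 1 := (div_lt_one htc).2 (by linarith)
  set Q : ℕ → ℝ := fun l => ((c:ℝ)/t) * r ^ l / 2 ^ k with hQdef
  have hQpos : ∀ l, 0 < Q l := fun l => by
    have : (0:ℝ) < r ^ l := pow_pos hr0 l
    positivity
  -- pointwise Gibbs-type bound
  have key : ∀ q ∈ S, (cnt q : ℝ) * Real.log ((c:ℝ) / (cnt q : ℝ)) ≤
      (c:ℝ) * Q q.1 - (cnt q : ℝ) - (cnt q : ℝ) * Real.log (Q q.1) := by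
    intro q hq
    rcases Nat.eq_zero_or_pos (cnt q) with h0 | hpos
    · rw [h0]
      simp only [Nat.cast_zero, zero_mul, sub_zero]
      have := (hQpos q.1).le
      positivity
    · have hn : (0:ℝ) < (cnt q : ℝ) := by exact_mod_cast hpos
      have hQ := hQpos q.1
      have h1 : (cnt q : ℝ) * Real.log ((c:ℝ) * Q q.1 / (cnt q : ℝ)) ≤
          (c:ℝ) * Q q.1 - cnt q := by
        have hx : (0:ℝ) < (c:ℝ) * Q q.1 / (cnt q : ℝ) := by positivity
        have h2 := Real.log_le_sub_one_of_pos hx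
        calc (cnt q : ℝ) * Real.log ((c:ℝ) * Q q.1 / (cnt q : ℝ))
            ≤ (cnt q : ℝ) * ((c:ℝ) * Q q.1 / (cnt q : ℝ) - 1) :=
              mul_le_mul_of_nonneg_left h2 hn.le
          _ = (c:ℝ) * Q q.1 - cnt q := by field_simp
      have h3 : Real.log ((c:ℝ) / (cnt q : ℝ)) =
          Real.log ((c:ℝ) * Q q.1 / (cnt q : ℝ)) - Real.log (Q q.1) := by
        rw [Real.log_div hc0.ne' hn.ne', Real.log_div (by positivity) hn.ne',
          Real.log_mul hc0.ne' hQ.ne']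
        ring
      rw [h3, mul_sub]
      linarith
  -- bound the total mass of Q over S
  have hQsum : ∑ q ∈ S, Q q.1 ≤ 1 := by
    set L : Finset ℕ := S.image Prod.fst with hL
    have hsub : S ⊆ L ×ˢ Finset.univ := by
      intro q hq
      rw [Finset.mem_product]
      exact ⟨Finset.mem_image_of_mem _ hq, Finset.mem_univ _⟩
    have step1 : ∑ q ∈ S, Q q.1 ≤ ∑ q ∈ L ×ˢ Finset.univ, Q q.1 :=
      Finset.sum_le_sum_of_subset_of_nonneg hsub (fun q _ _ => (hQpos q.1).le)
    have step2 : ∑ q ∈ L ×ˢ (Finset.univ : Finset W), Q q.1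
        = (Fintype.card W : ℝ) * ∑ l ∈ L, Q l := by
      rw [Finset.sum_product]
      simp only [Finset.sum_const, Finset.card_univ, nsmul_eq_mul]
      rw [← Finset.mul_sum]
    have h0L : 0 ∉ L := by
      intro h
      rw [hL, Finset.mem_image] at h
      obtain ⟨q, hq, hq0⟩ := h
      have := hl q hq
      omega
    have geo : ∑ l ∈ L, r ^ l ≤ r / (1 - r) := by
      have hsummable : Summable (fun n : ℕ => r ^ n) :=
        summable_geometric_of_lt_one hr0.le hr1
      have hins : (1:ℝ) + ∑ l ∈ L, r ^ l = ∑ l ∈ insert 0 L, r ^ l := by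
        rw [Finset.sum_insert h0L, pow_zero]
      have hle : ∑ l ∈ insert 0 L, r ^ l ≤ ∑' n : ℕ, r ^ n :=
        Summable.sum_le_tsum _ (fun i _ => (pow_pos hr0 i).le) hsummable
      rw [tsum_geometric_of_lt_one hr0.le hr1] at hle
      have h1r : (0:ℝ) < 1 - r := by linarith
      have : (1:ℝ) + ∑ l ∈ L, r ^ l ≤ (1 - r)⁻¹ := by rw [hins]; exact hle
      rw [div_eq_mul_inv]
      have hinv : (1 - r)⁻¹ - 1 = r * (1 - r)⁻¹ := by field_simp; ring
      linarith [this, hinv]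
    have hr_val : r / (1 - r) = (t:ℝ) / c := by
      rw [hrdef]
      field_simp
      rw [show (t:ℝ) + c - t = c by ring, div_self hc0.ne']
    have step3 : ∑ l ∈ L, Q l ≤ 1 / 2 ^ k := by
      have : ∑ l ∈ L, Q l = ((c:ℝ)/t) * (∑ l ∈ L, r ^ l) / 2 ^ k := by
        rw [hQdef, ← Finset.sum_div, ← Finset.mul_sum]
      rw [this]
      have h1 : ((c:ℝ)/t) * (∑ l ∈ L, r ^ l) ≤ 1 := by
        have h2 : ((c:ℝ)/t) * (∑ l ∈ L, r ^ l) ≤ ((c:ℝ)/t) * ((t:ℝ)/c) := by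
          apply mul_le_mul_of_nonneg_left _ (by positivity)
          rw [← hr_val]; exact geo
        have h3 : ((c:ℝ)/t) * ((t:ℝ)/c) = 1 := by field_simp
        linarith
      gcongr
    calc ∑ q ∈ S, Q q.1 ≤ (Fintype.card W : ℝ) * ∑ l ∈ L, Q l := step2 ▸ step1
      _ ≤ (2:ℝ) ^ k * (1 / 2 ^ k) := by
          refine mul_le_mul ?_ step3 ?_ (by positivity)
          · exact_mod_cast hW
          · exact Finset.sum_nonneg fun l _ => (hQpos l).le
      _ = 1 := by field_simp
  -- compute ∑ cnt q * log (Q q.1)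
  have hlogQ : ∀ l : ℕ, Real.log (Q l) =
      Real.log ((c:ℝ)/t) + l * Real.log r - k * Real.log 2 := by
    intro l
    rw [hQdef]
    have h1 : (0:ℝ) < (c:ℝ)/t := by positivity
    have h2 : (0:ℝ) < r ^ l := pow_pos hr0 l
    rw [Real.log_div (by positivity) (by positivity), Real.log_mul h1.ne' h2.ne',
      Real.log_pow, Real.log_pow]
  have hsum' : ∑ q ∈ S, (cnt q : ℝ) = (c:ℝ) := by exact_mod_cast congrArg Nat.cast hsum
  have hwsum' : ∑ q ∈ S, (q.1 : ℝ) * (cnt q : ℝ) = (t:ℝ) := by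
    have := congrArg (Nat.cast (R := ℝ)) hwsum
    push_cast at this
    exact this
  have sumlogQ : ∑ q ∈ S, (cnt q : ℝ) * Real.log (Q q.1)
      = (c:ℝ) * (Real.log ((c:ℝ)/t) - k * Real.log 2) + (t:ℝ) * Real.log r := by
    have : ∀ q ∈ S, (cnt q : ℝ) * Real.log (Q q.1)
        = (cnt q : ℝ) * (Real.log ((c:ℝ)/t) - k * Real.log 2)
          + ((q.1 : ℝ) * (cnt q : ℝ)) * Real.log r := by
      intro q _
      rw [hlogQ q.1]; ring
    rw [Finset.sum_congr rfl this, Finset.sum_add_distrib, ← Finset.sum_mul,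
      ← Finset.sum_mul, hsum', hwsum']
  -- main log-inequality
  have main : ∑ q ∈ S, (cnt q : ℝ) * Real.log ((c:ℝ) / (cnt q : ℝ)) ≤
      (c:ℝ) * (k * Real.log 2) + (c:ℝ) * Real.log ((t:ℝ)/c)
        + (t:ℝ) * Real.log (((t:ℝ)+c)/t) := by
    have h1 : ∑ q ∈ S, (cnt q : ℝ) * Real.log ((c:ℝ) / (cnt q : ℝ)) ≤
        ∑ q ∈ S, ((c:ℝ) * Q q.1 - (cnt q : ℝ) - (cnt q : ℝ) * Real.log (Q q.1)) :=
      Finset.sum_le_sum key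
    have h2 : ∑ q ∈ S, ((c:ℝ) * Q q.1 - (cnt q : ℝ) - (cnt q : ℝ) * Real.log (Q q.1))
        = (c:ℝ) * (∑ q ∈ S, Q q.1) - (c:ℝ) - ∑ q ∈ S, (cnt q : ℝ) * Real.log (Q q.1) := by
      rw [Finset.sum_sub_distrib, Finset.sum_sub_distrib, Finset.mul_sum, hsum']
    have h3 : (c:ℝ) * (∑ q ∈ S, Q q.1) - (c:ℝ) ≤ 0 := by
      have := mul_le_mul_of_nonneg_left hQsum hc0.le
      linarith
    have hlogr : Real.log r = - Real.log (((t:ℝ)+c)/t) := by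
      rw [hrdef, ← Real.log_inv]
      congr 1
      field_simp
    have hlogct : Real.log ((c:ℝ)/t) = - Real.log ((t:ℝ)/c) := by
      rw [← Real.log_inv]
      congr 1
      field_simp
    rw [h2, sumlogQ, hlogr, hlogct] at h1
    linarith
  -- convert to logb
  have hlog2 : (0:ℝ) < Real.log 2 := Real.log_pos (by norm_num)
  have lhs_eq : ∑ q ∈ S, (cnt q : ℝ) * Real.logb 2 ((c:ℝ) / (cnt q : ℝ))
      = (∑ q ∈ S, (cnt q : ℝ) * Real.log ((c:ℝ) / (cnt q : ℝ))) / Real.log 2 := by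
    rw [Finset.sum_div]
    refine Finset.sum_congr rfl fun q _ => ?_
    rw [Real.logb, mul_div_assoc]
  have step : ∑ q ∈ S, (cnt q : ℝ) * Real.logb 2 ((c:ℝ) / (cnt q : ℝ)) ≤
      (k:ℝ) * c + (t:ℝ) * Real.logb 2 (((t:ℝ)+c)/t) + (c:ℝ) * Real.logb 2 ((t:ℝ)/c) := by
    rw [lhs_eq, Real.logb, Real.logb, div_le_iff₀ hlog2]
    calc (∑ q ∈ S, (cnt q : ℝ) * Real.log ((c:ℝ) / (cnt q : ℝ)))
        ≤ (c:ℝ) * (k * Real.log 2) + (c:ℝ) * Real.log ((t:ℝ)/c)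
          + (t:ℝ) * Real.log (((t:ℝ)+c)/t) := main
      _ = ((k:ℝ) * c + (t:ℝ) * (Real.log (((t:ℝ)+c)/t) / Real.log 2)
          + (c:ℝ) * (Real.log ((t:ℝ)/c) / Real.log 2)) * Real.log 2 := by
        field_simp
        ring
  have heq : ((t:ℝ)+c)/t = 1 + (c:ℝ)/t := by field_simp
  have hlogb_nonneg : 0 ≤ Real.logb 2 (1 + (c:ℝ)/t) := by
    apply Real.logb_nonneg (by norm_num)
    have : 0 ≤ (c:ℝ)/t := by positivity
    linarith
  calc ∑ q ∈ S, (cnt q : ℝ) * Real.logb 2 ((c:ℝ) / (cnt q : ℝ))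
      ≤ (k:ℝ) * c + (t:ℝ) * Real.logb 2 (((t:ℝ)+c)/t) + (c:ℝ) * Real.logb 2 ((t:ℝ)/c) := step
    _ ≤ (k:ℝ) * c + ((t:ℝ)+c) * Real.logb 2 (1 + (c:ℝ)/t) + (c:ℝ) * Real.logb 2 ((t:ℝ)/c) := by
        rw [heq]
        have : (t:ℝ) * Real.logb 2 (1 + (c:ℝ)/t) ≤ ((t:ℝ)+c) * Real.logb 2 (1 + (c:ℝ)/t) :=
          mul_le_mul_of_nonneg_right (by linarith) hlogb_nonneg
        linarith
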